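/- Under the stated hypotheses, for the parallel hybrid algorithm, for every u ∈ F one has lim_{n→∞} ‖A_{k_n} z̄_n - A_{k_n} u‖ = 0. -/

import Mathlib

open Filter Topology
open scoped RealInnerProductSpace

/-- `p` is the metric projection of `x` onto the set `D`:
it belongs to `D` and minimizes the distance to `x` over `D`. -/
def IsMetricProj {H : Type*} [NormedAddCommGroup H] [InnerProductSpace ℝ H]
    (D : Set H) (x p : H) : Prop :=
  p ∈ D ∧ ∀ w ∈ D, ‖p - x‖ ≤ ‖w - x‖

section Helpers

variable {H : Type*} [NormedAddCommGroup H] [InnerProductSpace ℝ H]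

lemma le_of_sq_le_sq' {a b : ℝ} (ha : 0 ≤ a) (hb : 0 ≤ b) (h : a ^ 2 ≤ b ^ 2) : a ≤ b := by
  nlinarith

lemma isMetricProj_inner {D : Set H} (hD : Convex ℝ D) {x p : H}
    (h : IsMetricProj D x p) {w : H} (hw : w ∈ D) : ⟪x - p, w - p⟫ ≤ 0 := by
  haveI : Nonempty D := ⟨⟨p, h.1⟩⟩
  have hinf : ‖x - p‖ = ⨅ w : D, ‖x - w‖ := by
    refine le_antisymm (le_ciInf fun w => ?_)
      (ciInf_le (f := fun w : D => ‖x - w‖) ⟨0, fun _ ⟨_, hc⟩ => hc ▸ norm_nonneg _⟩ ⟨p, h.1⟩)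
    rw [norm_sub_rev x p, norm_sub_rev x w]
    exact h.2 w w.2
  exact (norm_eq_iInf_iff_real_inner_le_zero hD h.1).mp hinf w hw

lemma isMetricProj_nonexp {D : Set H} (hD : Convex ℝ D) {x y p q : H}
    (h1 : IsMetricProj D x p) (h2 : IsMetricProj D y q) : ‖p - q‖ ≤ ‖x - y‖ := by
  have i1 : ⟪x - p, q - p⟫ ≤ 0 := isMetricProj_inner hD h1 h2.1
  have i2 : ⟪y - q, p - q⟫ ≤ 0 := isMetricProj_inner hD h2 h1.1
  have i1' : 0 ≤ ⟪x - p, p - q⟫ := by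
    rw [show p - q = -(q - p) by abel, inner_neg_right]; linarith
  have i2' : 0 ≤ ⟪y - q, q - p⟫ := by
    rw [show q - p = -(p - q) by abel, inner_neg_right]; linarith
  have expand : ⟪x - y, p - q⟫ = ⟪x - p, p - q⟫ + ‖p - q‖ ^ 2 + ⟪y - q, q - p⟫ := by
    simp only [inner_sub_left, inner_sub_right, ← real_inner_self_eq_norm_sq]
    rw [real_inner_comm q p]
    ring
  have key : ‖p - q‖ ^ 2 ≤ ⟪x - y, p - q⟫ := by rw [expand]; linarith
  have hle : ⟪x - y, p - q⟫ ≤ ‖x - y‖ * ‖p - q‖ := real_inner_le_norm _ _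
  nlinarith [norm_nonneg (p - q), norm_nonneg (x - y)]

lemma convex_norm_le_norm (a b : H) : Convex ℝ {v : H | ‖v - a‖ ≤ ‖v - b‖} := by
  have hset : {v : H | ‖v - a‖ ≤ ‖v - b‖}
      = {v : H | 2 * ⟪v, b - a⟫ ≤ ‖b‖ ^ 2 - ‖a‖ ^ 2} := by
    ext v
    simp only [Set.mem_setOf_eq]
    have ea := norm_sub_sq_real v a
    have eb := norm_sub_sq_real v b
    have eab : ⟪v, b - a⟫ = ⟪v, b⟫ - ⟪v, a⟫ := inner_sub_right _ _ _
    constructor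
    · intro hvab
      have : ‖v - a‖ ^ 2 ≤ ‖v - b‖ ^ 2 := by
        apply pow_le_pow_left₀ (norm_nonneg _) hvab
      nlinarith
    · intro hvab
      have : ‖v - a‖ ^ 2 ≤ ‖v - b‖ ^ 2 := by nlinarith
      exact le_of_sq_le_sq' (norm_nonneg _) (norm_nonneg _) this
  rw [hset]
  exact convex_halfSpace_le
    ⟨fun p q => by rw [inner_add_left]; ring, fun c p => by rw [real_inner_smul_left, smul_eq_mul]; ring⟩ _

lemma convex_inner_ge (c w : H) : Convex ℝ {v : H | 0 ≤ ⟪c, w - v⟫} := by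
  have hset : {v : H | 0 ≤ ⟪c, w - v⟫} = {v : H | ⟪c, v⟫ ≤ ⟪c, w⟫} := by
    ext v
    simp only [Set.mem_setOf_eq, inner_sub_right]
    constructor <;> intro h <;> linarith
  rw [hset]
  exact convex_halfSpace_le
    ⟨fun p q => by rw [inner_add_right], fun r p => by rw [real_inner_smul_right, smul_eq_mul]⟩ _

end Helpers
theorem operator_values_converge
    {H : Type*} [NormedAddCommGroup H] [InnerProductSpace ℝ H] [CompleteSpace H]
    -- `C` is a nonempty closed convex subset of `H`
    (C : Set H) (hCne : C.Nonempty) (hCcl : IsClosed C) (hCcv : Convex ℝ C)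
    (K M N : ℕ)
    -- the bifunctions `f_l : C × C → ℝ` satisfy conditions (A1)-(A4)
    (f : Fin K → H → H → ℝ)
    (hfA1 : ∀ l, ∀ p ∈ C, f l p p = 0)
    (hfA2 : ∀ l, ∀ p ∈ C, ∀ q ∈ C, f l p q + f l q p ≤ 0)
    (hfA3 : ∀ l, ∀ p ∈ C, ∀ q ∈ C, ∀ w ∈ C,
      Filter.limsup (fun t : ℝ => f l (t • w + (1 - t) • p) q)
        (nhdsWithin 0 (Set.Ioi 0)) ≤ f l p q)
    (hfA4cv : ∀ l, ∀ p ∈ C, ConvexOn ℝ C (f l p))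
    (hfA4lsc : ∀ l, ∀ p ∈ C, LowerSemicontinuousOn (f l p) C)
    -- the mappings `A_k : C → H` are `α`-inverse strongly monotone
    (α : ℝ) (hα : 0 < α) (A : Fin M → H → H)
    (hA : ∀ k, ∀ p ∈ C, ∀ q ∈ C, α * ‖A k p - A k q‖ ^ 2 ≤ ⟪A k p - A k q, p - q⟫)
    -- the mappings `S_i : C → C` are nonexpansive
    (S : Fin N → H → H) (hSmap : ∀ i, ∀ p ∈ C, S i p ∈ C)
    (hS : ∀ i, ∀ p ∈ C, ∀ q ∈ C, ‖S i p - S i q‖ ≤ ‖p - q‖)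
    -- parameters: `λ ∈ (0, 2α)`, `{α_n} ⊂ [0,1]`, `{r_n} ⊂ [d, ∞)`, `d > 0`
    (lam : ℝ) (hlam : lam ∈ Set.Ioo 0 (2 * α))
    (a : ℕ → ℝ) (ha : ∀ n, a n ∈ Set.Icc (0 : ℝ) 1)
    (ha' : Filter.limsup a Filter.atTop < 1)
    (d : ℝ) (hd : 0 < d) (r : ℕ → ℝ) (hr : ∀ n, d ≤ r n)
    -- `F = (∩ EP(f_l)) ∩ (∩ F(S_i)) ∩ (∩ VI(A_k, C))` is nonempty
    (F : Set H)
    (hF : F = {p | p ∈ C ∧ (∀ l, ∀ q ∈ C, 0 ≤ f l p q) ∧ (∀ i, S i p = p) ∧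
      (∀ k, ∀ q ∈ C, 0 ≤ ⟪A k p, q - p⟫)})
    (hFne : F.Nonempty)
    -- the parallel hybrid algorithm
    (x : ℕ → H) (z : ℕ → Fin K → H) (uu : ℕ → Fin M → H) (y : ℕ → Fin N → H)
    (ln : ℕ → Fin K) (kn : ℕ → Fin M) (inn : ℕ → Fin N)
    (Cn Qn : ℕ → Set H)
    -- `z_n^l` solves the regularized equilibrium problem for `f_l` at `x_n`
    (hz : ∀ n l, z n l ∈ C ∧
      ∀ q ∈ C, 0 ≤ f l (z n l) q + (1 / r n) * ⟪q - z n l, z n l - x n⟫)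
    -- `l_n` attains `max{‖z_n^l - x_n‖}`, `z̄_n = z_n^{l_n}`
    (hln : ∀ n l, ‖z n l - x n‖ ≤ ‖z n (ln n) - x n‖)
    -- `u_n^k = P_C(z̄_n - λ A_k z̄_n)`
    (hu : ∀ n k, IsMetricProj C (z n (ln n) - lam • A k (z n (ln n))) (uu n k))
    -- `k_n` attains `max{‖u_n^k - x_n‖}`, `ū_n = u_n^{k_n}`
    (hkn : ∀ n k, ‖uu n k - x n‖ ≤ ‖uu n (kn n) - x n‖)
    -- `y_n^i = α_n ū_n + (1 - α_n) S_i ū_n`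
    (hy : ∀ n i, y n i = a n • uu n (kn n) + (1 - a n) • S i (uu n (kn n)))
    -- `i_n` attains `max{‖y_n^i - x_n‖}`, `ȳ_n = y_n^{i_n}`
    (hin : ∀ n i, ‖y n i - x n‖ ≤ ‖y n (inn n) - x n‖)
    -- `C_n = {v : ‖v - ȳ_n‖ ≤ ‖v - z̄_n‖ ≤ ‖v - x_n‖}`
    (hCn : ∀ n, Cn n = {v | ‖v - y n (inn n)‖ ≤ ‖v - z n (ln n)‖ ∧
      ‖v - z n (ln n)‖ ≤ ‖v - x n‖})
    -- `Q_n = {v : ⟨x_0 - x_n, x_n - v⟩ ≥ 0}`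
    (hQn : ∀ n, Qn n = {v | 0 ≤ ⟪x 0 - x n, x n - v⟫})
    -- `x_{n+1} = P_{C_n ∩ Q_n} x_0`
    (hx : ∀ n, IsMetricProj (Cn n ∩ Qn n) (x 0) (x (n + 1)))
    :
    ∀ u ∈ F, Filter.Tendsto (fun n => ‖A (kn n) (z n (ln n)) - A (kn n) u‖)
      Filter.atTop (nhds 0) := by
  intro u hu_mem
  rw [hF] at hu_mem
  obtain ⟨huC, huEP, huS, huVI⟩ := hu_mem
  -- basic memberships
  have hzC : ∀ n, z n (ln n) ∈ C := fun n => (hz n (ln n)).1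
  have huuC : ∀ n k, uu n k ∈ C := fun n k => (hu n k).1
  have hlampos : 0 < lam := hlam.1
  have hlam2 : lam < 2 * α := hlam.2
  -- Step (a): ‖u - z̄_n‖ ≤ ‖u - x_n‖
  have hzu : ∀ n, ‖u - z n (ln n)‖ ≤ ‖u - x n‖ := by
    intro n
    set zn := z n (ln n) with hzn
    have h1 : 0 ≤ f (ln n) zn u + (1 / r n) * ⟪u - zn, zn - x n⟫ := (hz n (ln n)).2 u huC
    have h2 : 0 ≤ f (ln n) u zn := huEP (ln n) zn (hzC n)
    have h3 : f (ln n) zn u + f (ln n) u zn ≤ 0 := hfA2 (ln n) zn (hzC n) u huC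
    have hrpos : 0 < r n := lt_of_lt_of_le hd (hr n)
    have h4 : 0 ≤ ⟪u - zn, zn - x n⟫ := by
      by_contra hneg
      push_neg at hneg
      have : (1 / r n) * ⟪u - zn, zn - x n⟫ < 0 :=
        mul_neg_of_pos_of_neg (by positivity) hneg
      linarith
    have hexp : ‖u - x n‖ ^ 2 = ‖u - zn‖ ^ 2 + 2 * ⟪u - zn, zn - x n⟫ + ‖zn - x n‖ ^ 2 := by
      rw [show u - x n = (u - zn) + (zn - x n) by abel]
      exact norm_add_sq_real _ _
    refine le_of_sq_le_sq' (norm_nonneg _) (norm_nonneg _) ?_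
    nlinarith [sq_nonneg ‖zn - x n‖]
  -- u is a fixed point of the projected gradient step: IsMetricProj C (u - lam • A k u) u
  have huproj : ∀ k : Fin M, IsMetricProj C (u - lam • A k u) u := by
    intro k
    refine ⟨huC, fun w hw => ?_⟩
    have hVI : 0 ≤ ⟪A k u, w - u⟫ := huVI k w hw
    have hL : u - (u - lam • A k u) = lam • A k u := by abel
    have hR : w - (u - lam • A k u) = (w - u) + lam • A k u := by abel
    refine le_of_sq_le_sq' (norm_nonneg _) (norm_nonneg _) ?_
    rw [hL, hR, norm_add_sq_real]
    have : ⟪w - u, lam • A k u⟫ = lam * ⟪A k u, w - u⟫ := by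
      rw [real_inner_smul_right, real_inner_comm]
    rw [this]
    nlinarith [sq_nonneg ‖w - u‖, mul_nonneg hlampos.le hVI]
  -- Step (b): key inequality with the operator term
  have hkey : ∀ n, ‖uu n (kn n) - u‖ ^ 2
      + lam * (2 * α - lam) * ‖A (kn n) (z n (ln n)) - A (kn n) u‖ ^ 2
      ≤ ‖z n (ln n) - u‖ ^ 2 := by
    intro n
    set k := kn n
    set zn := z n (ln n) with hzn
    have hne : ‖uu n k - u‖ ≤ ‖(zn - lam • A k zn) - (u - lam • A k u)‖ :=
      isMetricProj_nonexp hCcv (hu n k) (huproj k)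
    have hrw : (zn - lam • A k zn) - (u - lam • A k u)
        = (zn - u) - lam • (A k zn - A k u) := by
      rw [smul_sub]; abel
    have hmono : α * ‖A k zn - A k u‖ ^ 2 ≤ ⟪A k zn - A k u, zn - u⟫ :=
      hA k zn (hzC n) u huC
    have hexp : ‖(zn - u) - lam • (A k zn - A k u)‖ ^ 2
        = ‖zn - u‖ ^ 2 - 2 * (lam * ⟪A k zn - A k u, zn - u⟫)
          + lam ^ 2 * ‖A k zn - A k u‖ ^ 2 := by
      rw [norm_sub_sq_real, real_inner_smul_right, norm_smul, mul_pow]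
      rw [Real.norm_eq_abs, abs_of_pos hlampos, real_inner_comm]
    have hsq : ‖uu n k - u‖ ^ 2 ≤ ‖(zn - lam • A k zn) - (u - lam • A k u)‖ ^ 2 :=
      pow_le_pow_left₀ (norm_nonneg _) hne 2
    rw [hrw, hexp] at hsq
    nlinarith [mul_le_mul_of_nonneg_left hmono (le_of_lt hlampos)]
  -- consequence: ‖ū_n - u‖ ≤ ‖z̄_n - u‖
  have hub_le : ∀ n, ‖uu n (kn n) - u‖ ≤ ‖z n (ln n) - u‖ := by
    intro n
    refine le_of_sq_le_sq' (norm_nonneg _) (norm_nonneg _) ?_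
    have := hkey n
    nlinarith [sq_nonneg ‖A (kn n) (z n (ln n)) - A (kn n) u‖,
      mul_pos hlampos (by linarith : (0:ℝ) < 2 * α - lam)]
  -- Step (c): ‖y_n^i - u‖ ≤ ‖ū_n - u‖
  have hyu : ∀ n i, ‖y n i - u‖ ≤ ‖uu n (kn n) - u‖ := by
    intro n i
    have hSfix : S i u = u := huS i
    have hrw : y n i - u = a n • (uu n (kn n) - u) + (1 - a n) • (S i (uu n (kn n)) - u) := by
      rw [hy n i]; module
    have ha0 : 0 ≤ a n := (ha n).1
    have ha1 : a n ≤ 1 := (ha n).2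
    have hSne : ‖S i (uu n (kn n)) - u‖ ≤ ‖uu n (kn n) - u‖ := by
      have h := hS i (uu n (kn n)) (huuC n (kn n)) u huC
      rw [hSfix] at h; exact h
    calc ‖y n i - u‖ ≤ ‖a n • (uu n (kn n) - u)‖ + ‖(1 - a n) • (S i (uu n (kn n)) - u)‖ := by
          rw [hrw]; exact norm_add_le _ _
      _ = a n * ‖uu n (kn n) - u‖ + (1 - a n) * ‖S i (uu n (kn n)) - u‖ := by
          rw [norm_smul, norm_smul, Real.norm_eq_abs, Real.norm_eq_abs,
            abs_of_nonneg ha0, abs_of_nonneg (by linarith : (0:ℝ) ≤ 1 - a n)]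
      _ ≤ a n * ‖uu n (kn n) - u‖ + (1 - a n) * ‖uu n (kn n) - u‖ := by
          have := mul_le_mul_of_nonneg_left hSne (by linarith : (0:ℝ) ≤ 1 - a n)
          linarith
      _ = ‖uu n (kn n) - u‖ := by ring
  -- u ∈ Cn n for all n
  have huCn : ∀ n, u ∈ Cn n := by
    intro n
    rw [hCn n]
    constructor
    · rw [norm_sub_rev u (y n (inn n)), norm_sub_rev u (z n (ln n))]
      exact le_trans (hyu n (inn n)) (hub_le n)
    · exact hzu n
  -- Cn n ∩ Qn n is convex
  have hconv : ∀ n, Convex ℝ (Cn n ∩ Qn n) := by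
    intro n
    apply Convex.inter
    · rw [hCn n]
      rw [Set.setOf_and]
      exact (convex_norm_le_norm _ _).inter (convex_norm_le_norm _ _)
    · rw [hQn n]
      exact convex_inner_ge _ _
  -- u ∈ Qn n for all n, by induction
  have huQn : ∀ n, u ∈ Qn n := by
    intro n
    induction n with
    | zero => rw [hQn 0]; simp
    | succ m ih =>
      rw [hQn (m + 1)]
      have hmem : u ∈ Cn m ∩ Qn m := ⟨huCn m, ih⟩
      have := isMetricProj_inner (hconv m) (hx m) hmem
      have hrw : u - x (m + 1) = -(x (m + 1) - u) := by abel
      rw [hrw, inner_neg_right] at this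
      simpa using this
  -- boundedness and monotonicity of E n = ‖x n - x 0‖^2
  have hEmono : ∀ n, ‖x n - x 0‖ ^ 2 + ‖x (n + 1) - x n‖ ^ 2 ≤ ‖x (n + 1) - x 0‖ ^ 2 := by
    intro n
    have hxQ : x (n + 1) ∈ Qn n := ((hx n).1).2
    rw [hQn n] at hxQ
    have hip : 0 ≤ ⟪x (n + 1) - x n, x n - x 0⟫ := by
      have : ⟪x (n + 1) - x n, x n - x 0⟫ = ⟪x 0 - x n, x n - x (n + 1)⟫ := by
        rw [show x (n+1) - x n = -(x n - x (n+1)) by abel,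
          show x n - x 0 = -(x 0 - x n) by abel, inner_neg_neg, real_inner_comm]
      rw [this]; exact hxQ
    have hexp : ‖x (n + 1) - x 0‖ ^ 2 = ‖x (n + 1) - x n‖ ^ 2
        + 2 * ⟪x (n + 1) - x n, x n - x 0⟫ + ‖x n - x 0‖ ^ 2 := by
      rw [show x (n + 1) - x 0 = (x (n + 1) - x n) + (x n - x 0) by abel]
      exact norm_add_sq_real _ _
    linarith
  have hEbdd : ∀ n, ‖x n - x 0‖ ≤ ‖u - x 0‖ := by
    intro n
    cases n with
    | zero => simp
    | succ m => exact (hx m).2 u ⟨huCn m, huQn m⟩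
  -- E converges, hence ‖x(n+1) - x n‖ → 0
  set E : ℕ → ℝ := fun n => ‖x n - x 0‖ ^ 2 with hE
  have hEmono' : Monotone E := by
    apply monotone_nat_of_le_succ
    intro n
    have := hEmono n
    simp only [hE]
    nlinarith [sq_nonneg ‖x (n + 1) - x n‖]
  have hEbdd' : BddAbove (Set.range E) := by
    refine ⟨‖u - x 0‖ ^ 2, ?_⟩
    rintro _ ⟨n, rfl⟩
    simp only [hE]
    exact pow_le_pow_left₀ (norm_nonneg _) (hEbdd n) 2
  have hEconv : Filter.Tendsto E Filter.atTop (nhds (⨆ n, E n)) :=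
    tendsto_atTop_ciSup hEmono' hEbdd'
  have hdiff : Filter.Tendsto (fun n => E (n + 1) - E n) Filter.atTop (nhds 0) := by
    have h1 : Filter.Tendsto (fun n => E (n + 1)) Filter.atTop (nhds (⨆ n, E n)) :=
      hEconv.comp (tendsto_add_atTop_nat 1)
    have := h1.sub hEconv
    simpa using this
  have hxdiff : Filter.Tendsto (fun n => ‖x (n + 1) - x n‖) Filter.atTop (nhds 0) := by
    have hsq : Filter.Tendsto (fun n => ‖x (n + 1) - x n‖ ^ 2) Filter.atTop (nhds 0) := by
      apply squeeze_zero (fun n => sq_nonneg _) (fun n => ?_) hdiff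
      have := hEmono n
      simp only [hE]
      linarith
    have : Filter.Tendsto (fun n => Real.sqrt (‖x (n + 1) - x n‖ ^ 2))
        Filter.atTop (nhds (Real.sqrt 0)) := hsq.sqrt
    simpa [Real.sqrt_sq (norm_nonneg _)] using this
  -- final squeeze
  have hbound : ∀ n, lam * (2 * α - lam) * ‖A (kn n) (z n (ln n)) - A (kn n) u‖ ^ 2
      ≤ 8 * ‖u - x 0‖ * ‖x (n + 1) - x n‖ := by
    intro n
    -- x(n+1) ∈ Cn n
    have hxC : x (n + 1) ∈ Cn n := ((hx n).1).1
    rw [hCn n] at hxC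
    obtain ⟨hc1, hc2⟩ := hxC
    have hyx : ‖x n - y n (inn n)‖ ≤ 2 * ‖x (n + 1) - x n‖ := by
      calc ‖x n - y n (inn n)‖ ≤ ‖x n - x (n + 1)‖ + ‖x (n + 1) - y n (inn n)‖ :=
            norm_sub_le_norm_sub_add_norm_sub _ _ _
        _ ≤ ‖x (n + 1) - x n‖ + ‖x (n + 1) - x n‖ := by
            rw [norm_sub_rev (x n) (x (n + 1))]
            have := le_trans hc1 hc2
            linarith
        _ = 2 * ‖x (n + 1) - x n‖ := by ring
    have hxu : ‖x n - u‖ ≤ 2 * ‖u - x 0‖ := by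
      calc ‖x n - u‖ ≤ ‖x n - x 0‖ + ‖x 0 - u‖ := norm_sub_le_norm_sub_add_norm_sub _ _ _
        _ ≤ ‖u - x 0‖ + ‖u - x 0‖ := by
            rw [norm_sub_rev (x 0) u]
            linarith [hEbdd n]
        _ = 2 * ‖u - x 0‖ := by ring
    have hyub : ‖y n (inn n) - u‖ ≤ ‖x n - u‖ := by
      calc ‖y n (inn n) - u‖ ≤ ‖uu n (kn n) - u‖ := hyu n (inn n)
        _ ≤ ‖z n (ln n) - u‖ := hub_le n
        _ ≤ ‖x n - u‖ := by
            rw [norm_sub_rev (z n (ln n)) u, norm_sub_rev (x n) u]; exact hzu n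
    have hdiffnorm : ‖x n - u‖ - ‖y n (inn n) - u‖ ≤ 2 * ‖x (n + 1) - x n‖ := by
      have : ‖x n - u‖ ≤ ‖x n - y n (inn n)‖ + ‖y n (inn n) - u‖ :=
        norm_sub_le_norm_sub_add_norm_sub _ _ _
      linarith
    have hzxu : ‖z n (ln n) - u‖ ≤ ‖x n - u‖ := by
      rw [norm_sub_rev (z n (ln n)) u, norm_sub_rev (x n) u]; exact hzu n
    have hkey' := hkey n
    have hyu' : ‖y n (inn n) - u‖ ≤ ‖uu n (kn n) - u‖ := hyu n (inn n)
    have step : lam * (2 * α - lam) * ‖A (kn n) (z n (ln n)) - A (kn n) u‖ ^ 2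
        ≤ ‖x n - u‖ ^ 2 - ‖y n (inn n) - u‖ ^ 2 := by
      nlinarith [norm_nonneg (y n (inn n) - u), norm_nonneg (uu n (kn n) - u),
        norm_nonneg (z n (ln n) - u), norm_nonneg (x n - u)]
    have factor : ‖x n - u‖ ^ 2 - ‖y n (inn n) - u‖ ^ 2
        ≤ 8 * ‖u - x 0‖ * ‖x (n + 1) - x n‖ := by
      have h1 : ‖x n - u‖ + ‖y n (inn n) - u‖ ≤ 4 * ‖u - x 0‖ := by
        have := le_trans hyub hxu
        linarith
      have h2 : 0 ≤ ‖x n - u‖ + ‖y n (inn n) - u‖ := by positivity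
      have h3 : 0 ≤ ‖x (n + 1) - x n‖ := norm_nonneg _
      nlinarith
    linarith
  have hcpos : 0 < lam * (2 * α - lam) := mul_pos hlampos (by linarith)
  have hsq : Filter.Tendsto (fun n => ‖A (kn n) (z n (ln n)) - A (kn n) u‖ ^ 2)
      Filter.atTop (nhds 0) := by
    have hlim : Filter.Tendsto (fun n => (8 * ‖u - x 0‖ * ‖x (n + 1) - x n‖)
        / (lam * (2 * α - lam))) Filter.atTop (nhds 0) := by
      have := (hxdiff.const_mul (8 * ‖u - x 0‖)).div_const (lam * (2 * α - lam))
      simpa [mul_assoc] using this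
    apply squeeze_zero (fun n => sq_nonneg _) (fun n => ?_) hlim
    rw [le_div_iff₀ hcpos]
    have := hbound n
    nlinarith
  have : Filter.Tendsto (fun n => Real.sqrt (‖A (kn n) (z n (ln n)) - A (kn n) u‖ ^ 2))
      Filter.atTop (nhds (Real.sqrt 0)) := hsq.sqrt
  simpa [Real.sqrt_sq (norm_nonneg _)] using this
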